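/- Let T ≥ 1 be an integer and Φ_T = h^T ∘ g̃. Suppose there exists an n×q real matrix K̃ such that the spectral radius of A^T (I − K̃ C) is strictly less than 1. Then the sequence Φ_T^l(0) converges as l → ∞ to a symmetric positive semidefinite matrix Σ̄ satisfying the fixed-point equation Σ̄ = h^T ∘ g̃(Σ̄). -/

import Mathlib

open Matrix Filter Topology

section Aux

variable {n q : ℕ}

lemma ctr {m p : ℕ} (B : Matrix (Fin m) (Fin p) ℝ) : Bᴴ = Bᵀ := by
  ext i j; simp [conjTranspose_apply]

lemma psd_conj {X Y : Matrix (Fin n) (Fin n) ℝ} (hXY : (Y - X).PosSemidef)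
    {m : ℕ} (B : Matrix (Fin m) (Fin n) ℝ) :
    (B * Y * Bᵀ - B * X * Bᵀ).PosSemidef := by
  have := hXY.mul_mul_conjTranspose_same B
  rw [ctr] at this
  have e : B * (Y - X) * Bᵀ = B * Y * Bᵀ - B * X * Bᵀ := by
    rw [Matrix.mul_sub, Matrix.sub_mul]
  rwa [e] at this

lemma psd_conj'' {X : Matrix (Fin n) (Fin n) ℝ} (hX : X.PosSemidef)
    {m : ℕ} (B : Matrix (Fin m) (Fin n) ℝ) : (B * X * Bᵀ).PosSemidef := by
  have := hX.mul_mul_conjTranspose_same B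
  rwa [ctr] at this

lemma S_posdef (C : Matrix (Fin q) (Fin n) ℝ) {R : Matrix (Fin q) (Fin q) ℝ} (hR : R.PosDef)
    {X : Matrix (Fin n) (Fin n) ℝ} (hX : X.PosSemidef) :
    (C * X * Cᵀ + R).PosDef :=
  Matrix.PosDef.posSemidef_add (psd_conj'' hX C) hR

lemma key_identity (C : Matrix (Fin q) (Fin n) ℝ) {R : Matrix (Fin q) (Fin q) ℝ} (hR : R.PosDef)
    {X : Matrix (Fin n) (Fin n) ℝ} (hX : X.PosSemidef)
    (K : Matrix (Fin n) (Fin q) ℝ) :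
    (1 - K * C) * X * (1 - K * C)ᵀ + K * R * Kᵀ
      = (X - X * Cᵀ * (C * X * Cᵀ + R)⁻¹ * C * X)
        + (K - X * Cᵀ * (C * X * Cᵀ + R)⁻¹) * (C * X * Cᵀ + R)
            * (K - X * Cᵀ * (C * X * Cᵀ + R)⁻¹)ᵀ := by
  have hS : (C * X * Cᵀ + R).PosDef := S_posdef C hR hX
  set S := C * X * Cᵀ + R with hSdef
  set s := S⁻¹ with hsdef
  have hSd : IsUnit S.det := (Matrix.isUnit_iff_isUnit_det S).1 hS.isUnit
  have hs1 : S * s = 1 := Matrix.mul_nonsing_inv S hSd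
  have hs2 : s * S = 1 := Matrix.nonsing_inv_mul S hSd
  have hST : Sᵀ = S := by rw [← ctr]; exact hS.isHermitian
  have hsT : sᵀ = s := by rw [hsdef, Matrix.transpose_nonsing_inv, hST]
  have hXT : Xᵀ = X := by rw [← ctr]; exact hX.isHermitian
  have e1 : (K - X * Cᵀ * s) * S = K * S - X * Cᵀ := by
    rw [Matrix.sub_mul, Matrix.mul_assoc (X * Cᵀ) s S, hs2, Matrix.mul_one]
  have e2 : (K - X * Cᵀ * s)ᵀ = Kᵀ - s * (C * X) := by
    rw [transpose_sub, transpose_mul, transpose_mul, transpose_transpose, hsT, hXT]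
  have hcan : S * (s * (C * X)) = C * X := by
    rw [← Matrix.mul_assoc, hs1, Matrix.one_mul]
  have e3 : (K - X * Cᵀ * s) * S * (K - X * Cᵀ * s)ᵀ
      = K * (S * Kᵀ) - K * (C * X) - X * (Cᵀ * Kᵀ) + X * (Cᵀ * (s * (C * X))) := by
    rw [e1, e2]
    simp only [Matrix.sub_mul, Matrix.mul_sub, Matrix.mul_assoc, hcan]
    abel
  rw [e3]
  simp only [hSdef, transpose_sub, transpose_mul, transpose_one, hXT,
    Matrix.sub_mul, Matrix.mul_sub, Matrix.add_mul, Matrix.mul_add,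
    Matrix.one_mul, Matrix.mul_one, Matrix.mul_assoc]
  abel

/-- g̃ expressed with its own optimal gain. -/
lemma gt_eq (C : Matrix (Fin q) (Fin n) ℝ) {R : Matrix (Fin q) (Fin q) ℝ} (hR : R.PosDef)
    {X : Matrix (Fin n) (Fin n) ℝ} (hX : X.PosSemidef) :
    X - X * Cᵀ * (C * X * Cᵀ + R)⁻¹ * C * X
      = (1 - (X * Cᵀ * (C * X * Cᵀ + R)⁻¹) * C) * X
          * (1 - (X * Cᵀ * (C * X * Cᵀ + R)⁻¹) * C)ᵀ
        + (X * Cᵀ * (C * X * Cᵀ + R)⁻¹) * R * (X * Cᵀ * (C * X * Cᵀ + R)⁻¹)ᵀ := by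
  have := key_identity C hR hX (X * Cᵀ * (C * X * Cᵀ + R)⁻¹)
  rw [sub_self] at this
  simp only [Matrix.zero_mul, Matrix.mul_zero, add_zero] at this
  exact this.symm

lemma gt_psd (C : Matrix (Fin q) (Fin n) ℝ) {R : Matrix (Fin q) (Fin q) ℝ} (hR : R.PosDef)
    {X : Matrix (Fin n) (Fin n) ℝ} (hX : X.PosSemidef) :
    (X - X * Cᵀ * (C * X * Cᵀ + R)⁻¹ * C * X).PosSemidef := by
  rw [gt_eq C hR hX]
  exact (psd_conj'' hX _).add (psd_conj'' hR.posSemidef _)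

/-- quadratic dominance: any gain `K` upper bounds `g̃`. -/
lemma gt_quad (C : Matrix (Fin q) (Fin n) ℝ) {R : Matrix (Fin q) (Fin q) ℝ} (hR : R.PosDef)
    {X : Matrix (Fin n) (Fin n) ℝ} (hX : X.PosSemidef) (K : Matrix (Fin n) (Fin q) ℝ) :
    ((1 - K * C) * X * (1 - K * C)ᵀ + K * R * Kᵀ
      - (X - X * Cᵀ * (C * X * Cᵀ + R)⁻¹ * C * X)).PosSemidef := by
  rw [key_identity C hR hX K, add_sub_cancel_left]
  exact psd_conj'' (S_posdef C hR hX).posSemidef _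

lemma gt_mono (C : Matrix (Fin q) (Fin n) ℝ) {R : Matrix (Fin q) (Fin q) ℝ} (hR : R.PosDef)
    {X Y : Matrix (Fin n) (Fin n) ℝ} (hX : X.PosSemidef) (hXY : (Y - X).PosSemidef) :
    ((Y - Y * Cᵀ * (C * Y * Cᵀ + R)⁻¹ * C * Y)
      - (X - X * Cᵀ * (C * X * Cᵀ + R)⁻¹ * C * X)).PosSemidef := by
  have hY : Y.PosSemidef := by
    have := hX.add hXY
    rwa [add_sub_cancel] at this
  set Ky := Y * Cᵀ * (C * Y * Cᵀ + R)⁻¹ with hKy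
  have a1 := gt_eq C hR hY
  have a2 : ((1 - Ky * C) * Y * (1 - Ky * C)ᵀ - (1 - Ky * C) * X * (1 - Ky * C)ᵀ).PosSemidef :=
    psd_conj hXY _
  have a3 := gt_quad C hR hX Ky
  have := a2.add a3
  have e : (1 - Ky * C) * Y * (1 - Ky * C)ᵀ - (1 - Ky * C) * X * (1 - Ky * C)ᵀ
      + ((1 - Ky * C) * X * (1 - Ky * C)ᵀ + Ky * R * Kyᵀ
          - (X - X * Cᵀ * (C * X * Cᵀ + R)⁻¹ * C * X))
      = (Y - Y * Cᵀ * (C * Y * Cᵀ + R)⁻¹ * C * Y)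
        - (X - X * Cᵀ * (C * X * Cᵀ + R)⁻¹ * C * X) := by
    rw [a1]; abel
  rwa [e] at this

/-- iterate formula for `h`. -/
lemma h_iter (A Q : Matrix (Fin n) (Fin n) ℝ) (h : Matrix (Fin n) (Fin n) ℝ → Matrix (Fin n) (Fin n) ℝ)
    (hh : ∀ X, h X = A * X * Aᵀ + Q) (k : ℕ) (W : Matrix (Fin n) (Fin n) ℝ) :
    h^[k] W = A ^ k * W * (Aᵀ) ^ k + h^[k] 0 := by
  induction k generalizing W with
  | zero => simp
  | succ k ih =>
    rw [Function.iterate_succ_apply', Function.iterate_succ_apply' h k 0, ih W, ih 0, hh, hh,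
      pow_succ' A k, pow_succ Aᵀ k]
    simp only [Matrix.mul_add, Matrix.add_mul, Matrix.mul_zero, Matrix.zero_mul, add_zero,
      zero_add, Matrix.mul_assoc]
    abel

lemma h_iter0_psd (A Q : Matrix (Fin n) (Fin n) ℝ) (hQ : Q.PosSemidef)
    (h : Matrix (Fin n) (Fin n) ℝ → Matrix (Fin n) (Fin n) ℝ)
    (hh : ∀ X, h X = A * X * Aᵀ + Q) (k : ℕ) : (h^[k] (0:Matrix (Fin n) (Fin n) ℝ)).PosSemidef := by
  induction k with
  | zero => exact Matrix.PosSemidef.zero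
  | succ k ih =>
    rw [Function.iterate_succ_apply', hh]
    exact (psd_conj'' ih A).add hQ

lemma h_iter_psd (A Q : Matrix (Fin n) (Fin n) ℝ) (hQ : Q.PosSemidef)
    (h : Matrix (Fin n) (Fin n) ℝ → Matrix (Fin n) (Fin n) ℝ)
    (hh : ∀ X, h X = A * X * Aᵀ + Q) (k : ℕ) {X : Matrix (Fin n) (Fin n) ℝ}
    (hX : X.PosSemidef) : (h^[k] X).PosSemidef := by
  rw [h_iter A Q h hh]
  have : (A ^ k * X * (Aᵀ) ^ k).PosSemidef := by
    have := psd_conj'' hX (A ^ k)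
    rwa [transpose_pow] at this
  exact this.add (h_iter0_psd A Q hQ h hh k)

lemma h_iter_mono (A Q : Matrix (Fin n) (Fin n) ℝ)
    (h : Matrix (Fin n) (Fin n) ℝ → Matrix (Fin n) (Fin n) ℝ)
    (hh : ∀ X, h X = A * X * Aᵀ + Q) (k : ℕ) {X Y : Matrix (Fin n) (Fin n) ℝ}
    (hXY : (Y - X).PosSemidef) : (h^[k] Y - h^[k] X).PosSemidef := by
  have key : h^[k] Y - h^[k] X = A ^ k * Y * (A ^ k)ᵀ - A ^ k * X * (A ^ k)ᵀ := by
    rw [h_iter A Q h hh k Y, h_iter A Q h hh k X, transpose_pow]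
    abel
  have := psd_conj hXY (A ^ k)
  rwa [← key] at this

/-- quadratic form expansion -/
lemma quad_expand (Y : Matrix (Fin n) (Fin n) ℝ) (x : Fin n → ℝ) :
    x ⬝ᵥ (Y *ᵥ x) = ∑ i, ∑ j, x i * (Y i j * x j) := by
  simp [dotProduct, mulVec, Finset.mul_sum]

lemma quad_single (Y : Matrix (Fin n) (Fin n) ℝ) (i : Fin n) :
    (Pi.single i 1 : Fin n → ℝ) ⬝ᵥ (Y *ᵥ Pi.single i 1) = Y i i := by
  rw [quad_expand]
  simp [Pi.single_apply, Finset.sum_ite_eq']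

lemma quad_pair (Y : Matrix (Fin n) (Fin n) ℝ) (i j : Fin n) :
    ((Pi.single i 1 + Pi.single j 1 : Fin n → ℝ)) ⬝ᵥ
        (Y *ᵥ (Pi.single i 1 + Pi.single j 1)) = Y i i + Y i j + Y j i + Y j j := by
  rw [quad_expand]
  simp [Pi.single_apply, add_mul, mul_add, Finset.sum_add_distrib, Finset.sum_ite_eq']
  ring

lemma entry_formula (Y : Matrix (Fin n) (Fin n) ℝ) (hY : Yᵀ = Y) (i j : Fin n) :
    Y i j = (((Pi.single i 1 + Pi.single j 1 : Fin n → ℝ)) ⬝ᵥ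
          (Y *ᵥ (Pi.single i 1 + Pi.single j 1))
        - (Pi.single i 1 : Fin n → ℝ) ⬝ᵥ (Y *ᵥ Pi.single i 1)
        - (Pi.single j 1 : Fin n → ℝ) ⬝ᵥ (Y *ᵥ Pi.single j 1)) / 2 := by
  rw [quad_pair, quad_single, quad_single]
  have : Y j i = Y i j := by conv_rhs => rw [← hY, transpose_apply]
  rw [this]; ring

end Aux
section Decay

attribute [local instance] Matrix.linftyOpNormedAddCommGroup Matrix.linftyOpNormedRing
  Matrix.linftyOpNormedAlgebra

lemma entry_le_linfty {n : ℕ} (G : Matrix (Fin n) (Fin n) ℂ) (i j : Fin n) :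
    ‖G i j‖ ≤ ‖G‖ := by
  have h1 : ‖G i j‖₊ ≤ ∑ j' : Fin n, ‖G i j'‖₊ :=
    Finset.single_le_sum (f := fun j' => ‖G i j'‖₊) (fun _ _ => zero_le) (Finset.mem_univ j)
  have h2 : (∑ j' : Fin n, ‖G i j'‖₊) ≤ Finset.univ.sup fun i' => ∑ j' : Fin n, ‖G i' j'‖₊ :=
    Finset.le_sup (f := fun i' => ∑ j' : Fin n, ‖G i' j'‖₊) (Finset.mem_univ i)
  have := h1.trans h2
  rw [← Matrix.linfty_opNNNorm_def] at this
  exact_mod_cast this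

lemma decay_aux {n : ℕ} (F : Matrix (Fin n) (Fin n) ℝ)
    (hF : spectralRadius ℂ (F.map Complex.ofReal) < 1) :
    ∃ r : ℝ, 0 < r ∧ r < 1 ∧ ∃ c : ℝ, 0 ≤ c ∧ ∀ k : ℕ, ∀ i j, |(F ^ k) i j| ≤ c * r ^ k := by
  classical
  set Fc : Matrix (Fin n) (Fin n) ℂ := F.map Complex.ofReal with hFc
  haveI : CompleteSpace (Matrix (Fin n) (Fin n) ℂ) := FiniteDimensional.complete ℂ _
  have hG := spectrum.pow_nnnorm_pow_one_div_tendsto_nhds_spectralRadius Fc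
  obtain ⟨ρ, hρ1, hρ2⟩ := exists_between hF
  have hρne : ρ ≠ ⊤ := (hρ2.trans ENNReal.one_lt_top).ne
  set r0 : NNReal := ρ.toNNReal with hr0def
  have hρr : ρ = (r0 : ENNReal) := (ENNReal.coe_toNNReal hρne).symm
  have hr01 : (r0 : ℝ) < 1 := by
    have := hρ2; rw [hρr] at this; exact_mod_cast this
  have hev : ∀ᶠ k : ℕ in atTop, (‖Fc ^ k‖₊ : ENNReal) ^ (1 / (k : ℝ)) < ρ :=
    hG.eventually_lt_const hρ1
  have hev2 : ∀ᶠ k : ℕ in atTop, ‖Fc ^ k‖ ≤ (r0 : ℝ) ^ k := by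
    filter_upwards [hev, eventually_ge_atTop 1] with k hk hk1
    have hk0 : (k : ℝ) ≠ 0 := by positivity
    have h1 : ((‖Fc ^ k‖₊ : ENNReal) ^ (1 / (k : ℝ))) ^ (k : ℝ) ≤ ρ ^ (k : ℝ) :=
      ENNReal.rpow_le_rpow hk.le (by positivity)
    rw [← ENNReal.rpow_mul, one_div, inv_mul_cancel₀ hk0, ENNReal.rpow_one] at h1
    rw [hρr, ← ENNReal.coe_rpow_of_nonneg _ (by positivity)] at h1
    have h2 : ‖Fc ^ k‖₊ ≤ r0 ^ (k : ℝ) := by exact_mod_cast h1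
    have h3 := NNReal.coe_le_coe.2 h2
    rw [NNReal.coe_rpow, Real.rpow_natCast] at h3
    exact h3
  obtain ⟨N, hN⟩ := hev2.exists_forall_of_atTop
  set r : ℝ := max (r0 : ℝ) (1/2) with hrdef
  have hrpos : 0 < r := lt_of_lt_of_le one_half_pos (le_max_right _ _)
  have hr1 : r < 1 := max_lt hr01 one_half_lt_one
  have hbound : ∀ k, N ≤ k → ‖Fc ^ k‖ ≤ r ^ k := fun k hk =>
    (hN k hk).trans (pow_le_pow_left₀ r0.2 (le_max_left _ _) k)
  set c : ℝ := ((∑ k ∈ Finset.range N, ‖Fc ^ k‖) + 1) / r ^ N with hcdef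
  have hsum_nonneg : (0:ℝ) ≤ ∑ k ∈ Finset.range N, ‖Fc ^ k‖ :=
    Finset.sum_nonneg fun _ _ => norm_nonneg _
  have hc0 : 0 ≤ c := by positivity
  have hc1 : 1 ≤ c := by
    rw [hcdef, le_div_iff₀ (by positivity)]
    calc 1 * r ^ N ≤ 1 := by
          rw [one_mul]; exact pow_le_one₀ hrpos.le hr1.le
      _ ≤ _ := by linarith
  refine ⟨r, hrpos, hr1, c, hc0, fun k i j => ?_⟩
  have hnormle : ‖Fc ^ k‖ ≤ c * r ^ k := by
    rcases le_or_gt N k with hk | hk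
    · calc ‖Fc ^ k‖ ≤ r ^ k := hbound k hk
        _ ≤ c * r ^ k := le_mul_of_one_le_left (by positivity) hc1
    · have hmem : k ∈ Finset.range N := Finset.mem_range.2 hk
      have h1 : ‖Fc ^ k‖ ≤ ∑ k' ∈ Finset.range N, ‖Fc ^ k'‖ :=
        Finset.single_le_sum (f := fun k' => ‖Fc ^ k'‖) (fun _ _ => norm_nonneg _) hmem
      have h2 : r ^ N ≤ r ^ k := pow_le_pow_of_le_one hrpos.le hr1.le hk.le
      calc ‖Fc ^ k‖ ≤ (∑ k' ∈ Finset.range N, ‖Fc ^ k'‖) + 1 := by linarith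
        _ = c * r ^ N := by rw [hcdef, div_mul_cancel₀]; positivity
        _ ≤ c * r ^ k := by
            apply mul_le_mul_of_nonneg_left h2 hc0
  have hentry : (Fc ^ k) i j = ((F ^ k) i j : ℂ) := by
    have : Fc ^ k = (F ^ k).map Complex.ofReal := by
      have := map_pow (Complex.ofRealHom.mapMatrix) F k
      exact this.symm
    rw [this]; rfl
  calc |(F ^ k) i j| = ‖((F ^ k) i j : ℂ)‖ := by
        rw [Complex.norm_real]; exact (Real.norm_eq_abs _).symm
    _ = ‖(Fc ^ k) i j‖ := by rw [hentry]
    _ ≤ ‖Fc ^ k‖ := entry_le_linfty _ i j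
    _ ≤ c * r ^ k := hnormle

end Decay

/-- Under detectability of `(C, A^T)`, the iterates `Φ_T^l(0)` converge to a
symmetric positive semidefinite fixed point `Σ̄` of `h^T ∘ g̃`. -/
theorem stmt_10 {n q : ℕ} (A : Matrix (Fin n) (Fin n) ℝ) (C : Matrix (Fin q) (Fin n) ℝ)
    (Q : Matrix (Fin n) (Fin n) ℝ) (hQ : Q.PosSemidef)
    (R : Matrix (Fin q) (Fin q) ℝ) (hR : R.PosDef)
    (h gt : Matrix (Fin n) (Fin n) ℝ → Matrix (Fin n) (Fin n) ℝ)
    (hh : ∀ X, h X = A * X * Aᵀ + Q)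
    (hgt : ∀ X, gt X = X - X * Cᵀ * (C * X * Cᵀ + R)⁻¹ * C * X)
    (T : ℕ) (hT : 1 ≤ T)
    (Kt : Matrix (Fin n) (Fin q) ℝ)
    (hKt : spectralRadius ℂ ((A ^ T * (1 - Kt * C)).map Complex.ofReal) < 1) :
    ∃ Sbar : Matrix (Fin n) (Fin n) ℝ, Sbar.PosSemidef ∧
      Tendsto (fun l : ℕ => (h^[T] ∘ gt)^[l] 0) atTop (nhds Sbar) ∧
      Sbar = h^[T] (gt Sbar) := by
  classical
  set Φ : Matrix (Fin n) (Fin n) ℝ → Matrix (Fin n) (Fin n) ℝ := h^[T] ∘ gt with hΦ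
  set Xs : ℕ → Matrix (Fin n) (Fin n) ℝ := fun l => Φ^[l] 0 with hXsdef
  have hstep : ∀ l, Xs (l + 1) = Φ (Xs l) := fun l => Function.iterate_succ_apply' Φ l 0
  have hΦapp : ∀ X, Φ X = h^[T] (gt X) := fun X => rfl
  have hXs0 : Xs 0 = 0 := rfl
  -- positivity of the iterates
  have hgtpsd : ∀ {X : Matrix (Fin n) (Fin n) ℝ}, X.PosSemidef → (gt X).PosSemidef := by
    intro X hX; rw [hgt]; exact gt_psd C hR hX
  have hΦpsd : ∀ {X : Matrix (Fin n) (Fin n) ℝ}, X.PosSemidef → (Φ X).PosSemidef := by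
    intro X hX; rw [hΦapp]; exact h_iter_psd A Q hQ h hh T (hgtpsd hX)
  have hpsd : ∀ l, (Xs l).PosSemidef := by
    intro l; induction l with
    | zero => rw [hXs0]; exact Matrix.PosSemidef.zero
    | succ l ih => rw [hstep]; exact hΦpsd ih
  -- monotonicity of the iterates
  have hΦmono : ∀ {X Y : Matrix (Fin n) (Fin n) ℝ}, X.PosSemidef → (Y - X).PosSemidef →
      (Φ Y - Φ X).PosSemidef := by
    intro X Y hX hXY
    rw [hΦapp, hΦapp]
    apply h_iter_mono A Q h hh T
    rw [hgt, hgt]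
    exact gt_mono C hR hX hXY
  have hmono1 : ∀ l, (Xs (l + 1) - Xs l).PosSemidef := by
    intro l; induction l with
    | zero =>
      rw [hXs0, sub_zero, hstep 0, hXs0]
      exact hΦpsd Matrix.PosSemidef.zero
    | succ l ih =>
      have := hΦmono (hpsd l) ih
      rwa [← hstep (l + 1), ← hstep l] at this
  have hchain : ∀ l m, (Xs (l + m) - Xs l).PosSemidef := by
    intro l m; induction m with
    | zero => rw [Nat.add_zero, sub_self]; exact Matrix.PosSemidef.zero
    | succ m ih =>
      have := (hmono1 (l + m)).add ih
      rwa [sub_add_sub_cancel] at this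
  -- the stable gain bound
  set F : Matrix (Fin n) (Fin n) ℝ := A ^ T * (1 - Kt * C) with hFdef
  set M : Matrix (Fin n) (Fin n) ℝ :=
    A ^ T * (Kt * R * Ktᵀ) * (A ^ T)ᵀ + h^[T] (0 : Matrix (Fin n) (Fin n) ℝ) with hMdef
  have hMpsd : M.PosSemidef :=
    (psd_conj'' (psd_conj'' hR.posSemidef Kt) (A ^ T)).add (h_iter0_psd A Q hQ h hh T)
  have hub : ∀ {X : Matrix (Fin n) (Fin n) ℝ}, X.PosSemidef →
      (F * X * Fᵀ + M - Φ X).PosSemidef := by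
    intro X hX
    have d1 : ((1 - Kt * C) * X * (1 - Kt * C)ᵀ + Kt * R * Ktᵀ - gt X).PosSemidef := by
      rw [hgt]; exact gt_quad C hR hX Kt
    have d2 := h_iter_mono A Q h hh T d1
    have d3 : h^[T] ((1 - Kt * C) * X * (1 - Kt * C)ᵀ + Kt * R * Ktᵀ) = F * X * Fᵀ + M := by
      rw [h_iter A Q h hh T, hFdef, hMdef]
      simp only [transpose_mul, transpose_pow, Matrix.mul_add, Matrix.add_mul,
        Matrix.mul_assoc]
      abel
    rw [d3] at d2
    rw [hΦapp]
    exact d2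
  -- partial sums of the geometric bound
  set Bs : ℕ → Matrix (Fin n) (Fin n) ℝ :=
    fun l => ∑ k ∈ Finset.range l, F ^ k * M * (Fᵀ) ^ k with hBsdef
  have hBs0 : Bs 0 = 0 := by simp [hBsdef]
  have hBsucc : ∀ l, Bs (l + 1) = F * Bs l * Fᵀ + M := by
    intro l
    show ∑ k ∈ Finset.range (l + 1), F ^ k * M * (Fᵀ) ^ k = _
    rw [Finset.sum_range_succ']
    simp only [pow_zero, Matrix.one_mul, Matrix.mul_one]
    congr 1
    show _ = F * (∑ k ∈ Finset.range l, F ^ k * M * (Fᵀ) ^ k) * Fᵀ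
    rw [Finset.mul_sum, Finset.sum_mul]
    apply Finset.sum_congr rfl
    intro k _
    rw [pow_succ' F k, pow_succ Fᵀ k]
    simp only [Matrix.mul_assoc]
  have hBXs : ∀ l, (Bs l - Xs l).PosSemidef := by
    intro l; induction l with
    | zero => rw [hBs0, hXs0, sub_zero]; exact Matrix.PosSemidef.zero
    | succ l ih =>
      have s1 := psd_conj ih F
      have s2 := hub (hpsd l)
      have s3 := s1.add s2
      have e : F * Bs l * Fᵀ - F * Xs l * Fᵀ + (F * Xs l * Fᵀ + M - Φ (Xs l))
          = Bs (l + 1) - Xs (l + 1) := by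
        rw [hBsucc, hstep]; abel
      rwa [e] at s3
  -- geometric decay of entries
  obtain ⟨r, hr0, hr1, c, hc0, hdecay⟩ := decay_aux F hKt
  set m0 : ℝ := ∑ b, ∑ a, |M a b| with hm0def
  have hm00 : 0 ≤ m0 := Finset.sum_nonneg fun _ _ => Finset.sum_nonneg fun _ _ => abs_nonneg _
  have hprod : ∀ (k : ℕ) (i j : Fin n), |(F ^ k * M * (Fᵀ) ^ k) i j| ≤ c ^ 2 * m0 * r ^ k := by
    intro k i j
    have expand : (F ^ k * M * (Fᵀ) ^ k) i j
        = ∑ b, ∑ a, (F ^ k) i a * M a b * (F ^ k) j b := by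
      rw [Matrix.mul_apply]
      apply Finset.sum_congr rfl
      intro b _
      rw [Matrix.mul_apply, Finset.sum_mul]
      apply Finset.sum_congr rfl
      intro a _
      congr 1
      rw [← transpose_pow, transpose_apply]
    rw [expand]
    have step1 : |∑ b, ∑ a, (F ^ k) i a * M a b * (F ^ k) j b|
        ≤ ∑ b, ∑ a, (c * r ^ k) * |M a b| * (c * r ^ k) := by
      refine (Finset.abs_sum_le_sum_abs _ _).trans ?_
      apply Finset.sum_le_sum
      intro b _
      refine (Finset.abs_sum_le_sum_abs _ _).trans ?_
      apply Finset.sum_le_sum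
      intro a _
      rw [abs_mul, abs_mul]
      have h1 := hdecay k i a
      have h2 := hdecay k j b
      have hcr : (0:ℝ) ≤ c * r ^ k := by positivity
      exact mul_le_mul (mul_le_mul h1 le_rfl (abs_nonneg _) hcr) h2 (abs_nonneg _)
        (by positivity)
    refine step1.trans ?_
    have e2 : ∑ b, ∑ a, (c * r ^ k) * |M a b| * (c * r ^ k)
        = c ^ 2 * (r ^ k) ^ 2 * m0 := by
      rw [hm0def, Finset.mul_sum]
      apply Finset.sum_congr rfl
      intro b _
      rw [Finset.mul_sum]
      apply Finset.sum_congr rfl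
      intro a _
      ring
    rw [e2]
    have hrk1 : r ^ k ≤ 1 := pow_le_one₀ hr0.le hr1.le
    have hrk0 : (0:ℝ) ≤ r ^ k := by positivity
    nlinarith [sq_nonneg c, mul_nonneg (mul_nonneg (sq_nonneg c) hm00) hrk0]
  -- quadratic forms are monotone and bounded
  have hqnonneg : ∀ (x : Fin n → ℝ) l, 0 ≤ x ⬝ᵥ (Xs l *ᵥ x) := by
    intro x l
    simpa using (hpsd l).dotProduct_mulVec_nonneg x
  have hqmono : ∀ (x : Fin n → ℝ), Monotone fun l => x ⬝ᵥ (Xs l *ᵥ x) := by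
    intro x l m hlm
    obtain ⟨d, rfl⟩ := Nat.exists_eq_add_of_le hlm
    have h1 := (hchain l d).dotProduct_mulVec_nonneg x
    rw [star_trivial, Matrix.sub_mulVec, dotProduct_sub] at h1
    simp only
    linarith
  have hqbdd : ∀ (x : Fin n → ℝ), BddAbove (Set.range fun l => x ⬝ᵥ (Xs l *ᵥ x)) := by
    intro x
    set g : ℕ → ℝ := fun k => x ⬝ᵥ ((F ^ k * M * (Fᵀ) ^ k) *ᵥ x) with hgdef
    have hg0 : ∀ k, 0 ≤ g k := by
      intro k
      have hp : (F ^ k * M * (F ^ k)ᵀ).PosSemidef := psd_conj'' hMpsd (F ^ k)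
      rw [transpose_pow] at hp
      simpa [hgdef] using hp.dotProduct_mulVec_nonneg x
    have hgle : ∀ k, g k ≤ (c ^ 2 * m0 * (∑ i, |x i|) ^ 2) * r ^ k := by
      intro k
      rw [hgdef]
      simp only
      rw [quad_expand]
      have b1 : ∑ i, ∑ j, x i * ((F ^ k * M * (Fᵀ) ^ k) i j * x j)
          ≤ ∑ i, ∑ j, |x i| * ((c ^ 2 * m0 * r ^ k) * |x j|) := by
        apply Finset.sum_le_sum; intro i _
        apply Finset.sum_le_sum; intro j _
        calc x i * ((F ^ k * M * (Fᵀ) ^ k) i j * x j)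
            ≤ |x i * ((F ^ k * M * (Fᵀ) ^ k) i j * x j)| := le_abs_self _
          _ = |x i| * (|(F ^ k * M * (Fᵀ) ^ k) i j| * |x j|) := by
              rw [abs_mul, abs_mul]
          _ ≤ |x i| * ((c ^ 2 * m0 * r ^ k) * |x j|) := by
              apply mul_le_mul_of_nonneg_left _ (abs_nonneg _)
              exact mul_le_mul_of_nonneg_right (hprod k i j) (abs_nonneg _)
      refine b1.trans ?_
      have e3 : ∑ i, ∑ j, |x i| * ((c ^ 2 * m0 * r ^ k) * |x j|)
          = (c ^ 2 * m0 * (∑ i, |x i|) ^ 2) * r ^ k := by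
        rw [Finset.sum_comm]
        simp only [← Finset.sum_mul, ← Finset.mul_sum]
        ring
      rw [e3]
    have hgsum : Summable g := by
      refine Summable.of_nonneg_of_le hg0 hgle ?_
      exact (summable_geometric_of_lt_one hr0.le hr1).mul_left _
    have hBquad : ∀ l, x ⬝ᵥ (Bs l *ᵥ x) = ∑ k ∈ Finset.range l, g k := by
      intro l; induction l with
      | zero => rw [hBs0]; simp
      | succ l ih =>
        have : Bs (l + 1) = Bs l + F ^ l * M * (Fᵀ) ^ l := Finset.sum_range_succ _ _
        rw [this, Matrix.add_mulVec, dotProduct_add, ih, Finset.sum_range_succ]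
    refine ⟨∑' k, g k, ?_⟩
    rintro _ ⟨l, rfl⟩
    have h1 := (hBXs l).dotProduct_mulVec_nonneg x
    rw [star_trivial, Matrix.sub_mulVec, dotProduct_sub] at h1
    have h2 : x ⬝ᵥ (Xs l *ᵥ x) ≤ x ⬝ᵥ (Bs l *ᵥ x) := by linarith
    refine h2.trans ?_
    rw [hBquad l]
    exact Summable.sum_le_tsum (Finset.range l) (fun k _ => hg0 k) hgsum
  -- convergence of quadratic forms and entries
  have hconv : ∀ (x : Fin n → ℝ), Tendsto (fun l => x ⬝ᵥ (Xs l *ᵥ x)) atTop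
      (𝓝 (⨆ l, x ⬝ᵥ (Xs l *ᵥ x))) := fun x => tendsto_atTop_ciSup (hqmono x) (hqbdd x)
  set L : (Fin n → ℝ) → ℝ := fun x => ⨆ l, x ⬝ᵥ (Xs l *ᵥ x) with hLdef
  set Sb : Matrix (Fin n) (Fin n) ℝ := Matrix.of fun i j =>
    (L (Pi.single i 1 + Pi.single j 1) - L (Pi.single i 1) - L (Pi.single j 1)) / 2 with hSbdef
  have hsym : ∀ l, (Xs l)ᵀ = Xs l := by
    intro l; rw [← ctr]; exact (hpsd l).isHermitian
  have htende : ∀ i j, Tendsto (fun l => Xs l i j) atTop (𝓝 (Sb i j)) := by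
    intro i j
    have e : (fun l => Xs l i j) = fun l =>
        ((Pi.single i 1 + Pi.single j 1 : Fin n → ℝ) ⬝ᵥ
            (Xs l *ᵥ (Pi.single i 1 + Pi.single j 1))
          - (Pi.single i 1 : Fin n → ℝ) ⬝ᵥ (Xs l *ᵥ Pi.single i 1)
          - (Pi.single j 1 : Fin n → ℝ) ⬝ᵥ (Xs l *ᵥ Pi.single j 1)) / 2 :=
      funext fun l => entry_formula (Xs l) (hsym l) i j
    rw [e]
    have hSbij : Sb i j
        = (L (Pi.single i 1 + Pi.single j 1) - L (Pi.single i 1) - L (Pi.single j 1)) / 2 := rfl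
    rw [hSbij]
    exact (((hconv _).sub (hconv _)).sub (hconv _)).div_const 2
  have htendXs : Tendsto Xs atTop (𝓝 Sb) := by
    apply tendsto_pi_nhds.mpr
    intro i
    rw [tendsto_pi_nhds]
    intro j
    exact htende i j
  -- the limit is PSD
  have hquadSb : ∀ (x : Fin n → ℝ), Tendsto (fun l => x ⬝ᵥ (Xs l *ᵥ x)) atTop
      (𝓝 (x ⬝ᵥ (Sb *ᵥ x))) := by
    intro x
    have e : (fun l => x ⬝ᵥ (Xs l *ᵥ x)) = fun l => ∑ i, ∑ j, x i * (Xs l i j * x j) :=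
      funext fun l => quad_expand _ x
    rw [e, quad_expand]
    apply tendsto_finset_sum; intro i _
    apply tendsto_finset_sum; intro j _
    exact tendsto_const_nhds.mul ((htende i j).mul tendsto_const_nhds)
  have hLq : ∀ x, L x = x ⬝ᵥ (Sb *ᵥ x) := fun x =>
    tendsto_nhds_unique (hconv x) (hquadSb x)
  have hSbsym : Sbᵀ = Sb := by
    ext i j
    show Sb j i = Sb i j
    show (L (Pi.single j 1 + Pi.single i 1) - L (Pi.single j 1) - L (Pi.single i 1)) / 2
      = (L (Pi.single i 1 + Pi.single j 1) - L (Pi.single i 1) - L (Pi.single j 1)) / 2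
    rw [add_comm (Pi.single j 1) (Pi.single i 1)]
    ring
  have hSbpsd : Sb.PosSemidef := by
    refine Matrix.PosSemidef.of_dotProduct_mulVec_nonneg ?_ ?_
    · show Sbᴴ = Sb
      rw [ctr]
      exact hSbsym
    · intro x
      rw [star_trivial, ← hLq x]
      exact le_trans (hqnonneg x 0) (le_ciSup (hqbdd x) 0)
  -- passing to the limit in the fixed point equation
  have hSpd : (C * Sb * Cᵀ + R).PosDef := S_posdef C hR hSbpsd
  have hdet : (C * Sb * Cᵀ + R).det ≠ 0 := ne_of_gt hSpd.det_pos
  have hScont : ContinuousAt Ring.inverse ((C * Sb * Cᵀ + R).det) := by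
    rw [Ring.inverse_eq_inv']
    exact continuousAt_inv₀ hdet
  have cont1 : Tendsto (fun l => C * Xs l * Cᵀ + R) atTop (𝓝 (C * Sb * Cᵀ + R)) := by
    have hc : Continuous (fun Y : Matrix (Fin n) (Fin n) ℝ => C * Y * Cᵀ + R) :=
      ((continuous_const.matrix_mul continuous_id).matrix_mul continuous_const).add
        continuous_const
    exact (hc.tendsto Sb).comp htendXs
  have cont2 : Tendsto (fun l => (C * Xs l * Cᵀ + R)⁻¹) atTop (𝓝 ((C * Sb * Cᵀ + R)⁻¹)) :=
    (continuousAt_matrix_inv _ hScont).tendsto.comp cont1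
  have cont3 : Tendsto (fun l => gt (Xs l)) atTop (𝓝 (gt Sb)) := by
    have hGc : Continuous (fun p : Matrix (Fin n) (Fin n) ℝ × Matrix (Fin q) (Fin q) ℝ =>
        p.1 - p.1 * Cᵀ * p.2 * C * p.1) := by
      refine continuous_fst.sub ?_
      exact ((((continuous_fst.matrix_mul continuous_const).matrix_mul
        continuous_snd).matrix_mul continuous_const).matrix_mul continuous_fst)
    have hcomp := (hGc.tendsto (Sb, (C * Sb * Cᵀ + R)⁻¹)).comp
      (htendXs.prodMk_nhds cont2)
    have e : (fun l => gt (Xs l))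
        = fun l => Xs l - Xs l * Cᵀ * (C * Xs l * Cᵀ + R)⁻¹ * C * Xs l :=
      funext fun l => hgt (Xs l)
    rw [e, hgt Sb]
    simpa [Function.comp_def] using hcomp
  have cont4 : Continuous (h^[T]) := by
    have hch : Continuous h := by
      rw [show h = fun X => A * X * Aᵀ + Q from funext hh]
      exact ((continuous_const.matrix_mul continuous_id).matrix_mul continuous_const).add
        continuous_const
    have : ∀ k, Continuous (h^[k]) := by
      intro k; induction k with
      | zero => simpa using continuous_id
      | succ k ih =>
        rw [Function.iterate_succ']
        exact hch.comp ih
    exact this T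
  have cont5 : Tendsto (fun l => Φ (Xs l)) atTop (𝓝 (Φ Sb)) := by
    have := (cont4.tendsto (gt Sb)).comp cont3
    exact this
  have shift : Tendsto (fun l => Xs (l + 1)) atTop (𝓝 Sb) :=
    htendXs.comp (tendsto_add_atTop_nat 1)
  have shift' : Tendsto (fun l => Φ (Xs l)) atTop (𝓝 Sb) := by
    rw [show (fun l => Φ (Xs l)) = fun l => Xs (l + 1) from funext fun l => (hstep l).symm]
    exact shift
  have hfix : Sb = Φ Sb := tendsto_nhds_unique shift' cont5
  exact ⟨Sb, hSbpsd, htendXs, by rw [← hΦapp]; exact hfix⟩
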